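/- Let b > 0, p,q ∈ [1,∞] with q = p/(pb+1) (interpreted as q = 1/b if p = ∞), and let (μ_n) be non-increasing, regularly varying with index −b, and satisfy lim_{n→∞} n μ_n^{1/b} > 0. Then the p-ellipsoid E_p = {x ∈ ℓ^p : ∑ |x_n/μ_n|^p ≤ 1} is not totally bounded in ℓ^q: there exists ε* > 0 such that no finite ε-covering of E_p in the ℓ^q-norm exists for any ε ∈ (0, ε*). -/

import Mathlib

open Filter ENNReal

/-- `ℓ^r` "norm" of a real sequence, valued in `ℝ≥0∞` (sup norm when `r = ∞`). -/
noncomputable def seqNorm (r : ℝ≥0∞) (x : ℕ → ℝ) : ℝ≥0∞ :=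
  if r = ∞ then ⨆ n, (‖x n‖₊ : ℝ≥0∞)
  else (∑' n, (‖x n‖₊ : ℝ≥0∞) ^ r.toReal) ^ (1 / r.toReal)

lemma seqNorm_ofReal_eq (q : ℝ) (hq : 0 < q) (y : ℕ → ℝ) :
    seqNorm (ENNReal.ofReal q) y = (∑' n, (‖y n‖₊ : ℝ≥0∞) ^ q) ^ (1 / q) := by
  rw [seqNorm, if_neg ENNReal.ofReal_ne_top, ENNReal.toReal_ofReal hq.le]

lemma aux_halfpow_le (q δ v : ℝ) (hq : 0 < q) (hδ : 0 ≤ δ) :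
    (δ / 2) ^ q ≤ |δ - v| ^ q + |v| ^ q := by
  rcases le_total (δ / 2) |v| with h | h
  · calc (δ / 2) ^ q ≤ |v| ^ q := Real.rpow_le_rpow (by positivity) h hq.le
      _ ≤ _ := le_add_of_nonneg_left (by positivity)
  · have h2 : δ / 2 ≤ |δ - v| := by
      have h3 : δ - |v| ≤ |δ - v| := by
        have := abs_sub_abs_le_abs_sub δ v
        have : |δ| - |v| ≤ |δ - v| := this
        linarith [le_abs_self δ, abs_nonneg δ, abs_of_nonneg hδ]
      linarith
    calc (δ / 2) ^ q ≤ |δ - v| ^ q := Real.rpow_le_rpow (by positivity) h2 hq.le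
      _ ≤ _ := le_add_of_nonneg_right (by positivity)

theorem stmt18 (b : ℝ) (hb : 0 < b) (p : ℝ≥0∞) (hp : 1 ≤ p) (q : ℝ)
    (hq : q = if p = ∞ then 1 / b else p.toReal / (p.toReal * b + 1)) (hq1 : 1 ≤ q)
    (μ : ℕ → ℝ) (hpos : ∀ n, 0 < μ n) (hmono : ∀ m n : ℕ, m ≤ n → μ n ≤ μ m)
    (hrv : ∀ α : ℝ, 0 < α →
      Tendsto (fun n : ℕ => μ ⌊α * n⌋₊ / μ n) atTop (nhds (α ^ (-b))))
    (hlim : 0 < Filter.liminf (fun n : ℕ => (n : ℝ) * μ n ^ (1 / b)) atTop) :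
    ∃ εstar : ℝ, 0 < εstar ∧ ∀ ε : ℝ, 0 < ε → ε < εstar →
      ¬ ∃ S : Finset (ℕ → ℝ),
          {x : ℕ → ℝ | seqNorm p (fun n => x n / μ n) ≤ 1} ⊆
            ⋃ c ∈ S, {y : ℕ → ℝ | seqNorm (ENNReal.ofReal q) (fun n => y n - c n)
              ≤ ENNReal.ofReal ε} := by
  have hq0 : 0 < q := lt_of_lt_of_le one_pos hq1
  set t : ℝ := 1 / p.toReal with ht
  have ht0 : 0 ≤ t := by positivity
  -- key exponent identity
  have hqbt : q * b + q * t = 1 := by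
    by_cases hp' : p = ∞
    · rw [if_pos hp'] at hq
      have : t = 0 := by simp [ht, hp']
      rw [this, hq]
      field_simp
      ring
    · have hpt : (1 : ℝ) ≤ p.toReal := by
        have := ENNReal.toReal_mono hp' hp
        simpa using this
      have hpt0 : (0 : ℝ) < p.toReal := lt_of_lt_of_le one_pos hpt
      rw [if_neg hp'] at hq
      have hden : p.toReal * b + 1 ≠ 0 := by positivity
      rw [hq, ht]
      field_simp
  -- extract the liminf lower bound
  obtain ⟨c, hc0, N0, hN0⟩ : ∃ c > 0, ∃ N0 : ℕ, ∀ n ≥ N0, c ≤ (n : ℝ) * μ n ^ (1 / b) := by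
    set L := Filter.liminf (fun n : ℕ => (n : ℝ) * μ n ^ (1 / b)) atTop with hL
    have hbd : IsBoundedUnder (· ≥ ·) atTop (fun n : ℕ => (n : ℝ) * μ n ^ (1 / b)) :=
      Filter.isBoundedUnder_of ⟨0, fun n => by
        simp only [ge_iff_le]
        have := (hpos n).le
        positivity⟩
    have hev := Filter.eventually_lt_of_lt_liminf (show L / 2 < L from half_lt_self hlim) hbd
    rw [eventually_atTop] at hev
    obtain ⟨N0, hN0⟩ := hev
    exact ⟨L / 2, half_pos hlim, N0, fun n hn => (hN0 n hn).le⟩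
  set m0 : ℕ := N0 + 1 with hm0
  set s : ℝ := (c / 2) ^ b with hs
  have hs0 : 0 < s := Real.rpow_pos_of_pos (by positivity) b
  refine ⟨s / 4, by positivity, ?_⟩
  intro ε hε hεs
  rintro ⟨S, hcov⟩
  -- the test points
  set δ : ℕ → ℝ := fun k => μ (2 ^ (k + 1) * m0) * ((2 ^ k * m0 : ℕ) : ℝ) ^ (-t) with hδ
  have hδpos : ∀ k, 0 < δ k := by
    intro k
    have : (0 : ℝ) < ((2 ^ k * m0 : ℕ) : ℝ) := by positivity
    exact mul_pos (hpos _) (Real.rpow_pos_of_pos this _)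
  set x : ℕ → ℕ → ℝ := fun k n =>
    if n ∈ Finset.Ico (2 ^ k * m0) (2 ^ (k + 1) * m0) then δ k else 0 with hx
  have hKpos : ∀ k : ℕ, (0 : ℝ) < ((2 ^ k * m0 : ℕ) : ℝ) := by intro k; positivity
  -- each test point is in the ellipsoid
  have hxmem : ∀ k, x k ∈ {z : ℕ → ℝ | seqNorm p (fun n => z n / μ n) ≤ 1} := by
    intro k
    have hle : ∀ n ∈ Finset.Ico (2 ^ k * m0) (2 ^ (k + 1) * m0),
        μ (2 ^ (k + 1) * m0) ≤ μ n := by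
      intro n hn
      exact hmono n _ (Finset.mem_Ico.mp hn).2.le
    by_cases hp' : p = ∞
    · -- sup-norm case: δ k = μ M and μ M / μ n ≤ 1
      have htz : t = 0 := by simp [ht, hp']
      have hδk : δ k = μ (2 ^ (k + 1) * m0) := by
        simp [hδ, htz, Real.rpow_zero]
      simp only [Set.mem_setOf_eq, seqNorm, if_pos hp']
      refine iSup_le fun n => ?_
      by_cases hn : n ∈ Finset.Ico (2 ^ k * m0) (2 ^ (k + 1) * m0)
      · have hxn : x k n / μ n = δ k / μ n := by simp only [hx]; rw [if_pos hn]
        rw [hxn, hδk]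
        have h1 : μ (2 ^ (k + 1) * m0) / μ n ≤ 1 :=
          div_le_one_of_le₀ (hle n hn) (hpos n).le
        have h0 : (0:ℝ) ≤ μ (2 ^ (k + 1) * m0) / μ n :=
          div_nonneg (hpos _).le (hpos _).le
        rw [← enorm_eq_nnnorm, Real.enorm_eq_ofReal h0]
        exact le_trans (ENNReal.ofReal_le_ofReal h1) (by simp)
      · have hxn : x k n / μ n = 0 := by simp only [hx]; rw [if_neg hn, zero_div]
        simp [hxn]
    · have hpt : (1 : ℝ) ≤ p.toReal := by
        have := ENNReal.toReal_mono hp' hp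
        simpa using this
      have hpt0 : (0 : ℝ) < p.toReal := lt_of_lt_of_le one_pos hpt
      simp only [Set.mem_setOf_eq, seqNorm, if_neg hp']
      refine ENNReal.rpow_le_one ?_ (by positivity)
      have hzero : ∀ n ∉ Finset.Ico (2 ^ k * m0) (2 ^ (k + 1) * m0),
          (‖x k n / μ n‖₊ : ℝ≥0∞) ^ p.toReal = 0 := by
        intro n hn
        have hxn : x k n / μ n = 0 := by simp only [hx]; rw [if_neg hn, zero_div]
        simp [hxn, ENNReal.zero_rpow_of_pos hpt0]
      rw [tsum_eq_sum hzero]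
      calc ∑ n ∈ Finset.Ico (2 ^ k * m0) (2 ^ (k + 1) * m0),
            (‖x k n / μ n‖₊ : ℝ≥0∞) ^ p.toReal
          ≤ ∑ n ∈ Finset.Ico (2 ^ k * m0) (2 ^ (k + 1) * m0),
            ENNReal.ofReal ((((2 ^ k * m0 : ℕ) : ℝ)) ⁻¹) := by
            refine Finset.sum_le_sum fun n hn => ?_
            have hxn : x k n / μ n = δ k / μ n := by simp only [hx]; rw [if_pos hn]
            have h0 : (0:ℝ) ≤ δ k / μ n := div_nonneg (hδpos k).le (hpos n).le
            rw [hxn, ← enorm_eq_nnnorm, Real.enorm_eq_ofReal h0,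
              ENNReal.ofReal_rpow_of_nonneg h0 hpt0.le]
            refine ENNReal.ofReal_le_ofReal ?_
            have hstep : δ k / μ n ≤ ((2 ^ k * m0 : ℕ) : ℝ) ^ (-t) := by
              have heq : δ k / μ n
                  = (μ (2 ^ (k + 1) * m0) / μ n) * ((2 ^ k * m0 : ℕ) : ℝ) ^ (-t) := by
                simp only [hδ]; ring
              rw [heq]
              calc (μ (2 ^ (k + 1) * m0) / μ n) * ((2 ^ k * m0 : ℕ) : ℝ) ^ (-t)
                  ≤ 1 * ((2 ^ k * m0 : ℕ) : ℝ) ^ (-t) := by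
                    refine mul_le_mul_of_nonneg_right ?_ (by positivity)
                    exact div_le_one_of_le₀ (hle n hn) (hpos n).le
                _ = _ := one_mul _
            calc (δ k / μ n) ^ p.toReal
                ≤ (((2 ^ k * m0 : ℕ) : ℝ) ^ (-t)) ^ p.toReal :=
                  Real.rpow_le_rpow h0 hstep hpt0.le
              _ = ((2 ^ k * m0 : ℕ) : ℝ) ^ (-t * p.toReal) :=
                  (Real.rpow_mul (hKpos k).le _ _).symm
              _ = (((2 ^ k * m0 : ℕ) : ℝ)) ⁻¹ := by
                  rw [ht]
                  rw [show -(1 / p.toReal) * p.toReal = -1 by field_simp]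
                  rw [Real.rpow_neg_one]
        _ = 1 := by
            rw [Finset.sum_const, Nat.card_Ico]
            have hcard : 2 ^ (k + 1) * m0 - 2 ^ k * m0 = 2 ^ k * m0 := by
              rw [pow_succ]
              ring_nf
              omega
            rw [hcard, nsmul_eq_mul]
            rw [← ENNReal.ofReal_natCast, ← ENNReal.ofReal_mul (by positivity)]
            rw [mul_inv_cancel₀ (hKpos k).ne']
            simp
  -- choose centers
  have hch : ∀ k : ℕ, ∃ cS, cS ∈ S ∧
      seqNorm (ENNReal.ofReal q) (fun n => x k n - cS n) ≤ ENNReal.ofReal ε := by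
    intro k
    have := hcov (hxmem k)
    simpa [Set.mem_iUnion, Set.mem_setOf_eq] using this
  -- key separation claim
  have key : ∀ j k : ℕ, j < k → ∀ cS : ℕ → ℝ,
      seqNorm (ENNReal.ofReal q) (fun n => x k n - cS n) ≤ ENNReal.ofReal ε →
      seqNorm (ENNReal.ofReal q) (fun n => x j n - cS n) ≤ ENNReal.ofReal ε → False := by
    intro j k hjk cS hA hB
    have hconv : ∀ y : ℕ → ℝ,
        seqNorm (ENNReal.ofReal q) y ≤ ENNReal.ofReal ε →
        ∑' n, (‖y n‖₊ : ℝ≥0∞) ^ q ≤ ENNReal.ofReal (ε ^ q) := by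
      intro y hy
      rw [seqNorm_ofReal_eq q hq0] at hy
      have h1 := ENNReal.rpow_le_rpow hy hq0.le
      rw [← ENNReal.rpow_mul, one_div_mul_cancel hq0.ne', ENNReal.rpow_one,
        ENNReal.ofReal_rpow_of_nonneg hε.le hq0.le] at h1
      exact h1
    -- per-term lower bound on the block of k
    have hlow : ∀ n ∈ Finset.Ico (2 ^ k * m0) (2 ^ (k + 1) * m0),
        ENNReal.ofReal ((δ k / 2) ^ q)
          ≤ (‖x k n - cS n‖₊ : ℝ≥0∞) ^ q + (‖x j n - cS n‖₊ : ℝ≥0∞) ^ q := by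
      intro n hn
      have hxkn : x k n = δ k := by simp only [hx]; rw [if_pos hn]
      have hxjn : x j n = 0 := by
        simp only [hx]
        rw [if_neg]
        intro hmem
        have h1 := (Finset.mem_Ico.mp hmem).2
        have h2 := (Finset.mem_Ico.mp hn).1
        have h3 : 2 ^ (j + 1) * m0 ≤ 2 ^ k * m0 :=
          Nat.mul_le_mul_right _ (Nat.pow_le_pow_right (by norm_num) hjk)
        omega
      rw [hxkn, hxjn, ← enorm_eq_nnnorm, ← enorm_eq_nnnorm, Real.enorm_eq_ofReal_abs, Real.enorm_eq_ofReal_abs,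
        ENNReal.ofReal_rpow_of_nonneg (abs_nonneg _) hq0.le,
        ENNReal.ofReal_rpow_of_nonneg (abs_nonneg _) hq0.le,
        ← ENNReal.ofReal_add (by positivity) (by positivity)]
      refine ENNReal.ofReal_le_ofReal ?_
      have haux := aux_halfpow_le q (δ k) (cS n) hq0 (hδpos k).le
      have habs : |0 - cS n| = |cS n| := by rw [zero_sub, abs_neg]
      rw [habs]
      exact haux
    -- sum the lower bounds
    have hcard : 2 ^ (k + 1) * m0 - 2 ^ k * m0 = 2 ^ k * m0 := by
      have h2 : 2 ^ (k + 1) * m0 = 2 ^ k * m0 + 2 ^ k * m0 := by rw [pow_succ]; ring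
      omega
    have hsum : ((2 ^ k * m0 : ℕ) : ℝ≥0∞) * ENNReal.ofReal ((δ k / 2) ^ q)
        ≤ ENNReal.ofReal (ε ^ q) + ENNReal.ofReal (ε ^ q) := by
      calc ((2 ^ k * m0 : ℕ) : ℝ≥0∞) * ENNReal.ofReal ((δ k / 2) ^ q)
          = ∑ _n ∈ Finset.Ico (2 ^ k * m0) (2 ^ (k + 1) * m0),
              ENNReal.ofReal ((δ k / 2) ^ q) := by
            rw [Finset.sum_const, Nat.card_Ico, hcard, nsmul_eq_mul]
        _ ≤ ∑ n ∈ Finset.Ico (2 ^ k * m0) (2 ^ (k + 1) * m0),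
              ((‖x k n - cS n‖₊ : ℝ≥0∞) ^ q + (‖x j n - cS n‖₊ : ℝ≥0∞) ^ q) :=
            Finset.sum_le_sum hlow
        _ = (∑ n ∈ Finset.Ico (2 ^ k * m0) (2 ^ (k + 1) * m0),
              (‖x k n - cS n‖₊ : ℝ≥0∞) ^ q)
            + ∑ n ∈ Finset.Ico (2 ^ k * m0) (2 ^ (k + 1) * m0),
              (‖x j n - cS n‖₊ : ℝ≥0∞) ^ q := Finset.sum_add_distrib
        _ ≤ (∑' n, (‖x k n - cS n‖₊ : ℝ≥0∞) ^ q)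
            + ∑' n, (‖x j n - cS n‖₊ : ℝ≥0∞) ^ q :=
            add_le_add (ENNReal.sum_le_tsum _) (ENNReal.sum_le_tsum _)
        _ ≤ _ := add_le_add (hconv _ hA) (hconv _ hB)
    -- pass to real numbers
    have hreal : ((2 ^ k * m0 : ℕ) : ℝ) * (δ k / 2) ^ q ≤ 2 * ε ^ q := by
      have h1 : ENNReal.ofReal (((2 ^ k * m0 : ℕ) : ℝ) * (δ k / 2) ^ q)
          ≤ ENNReal.ofReal (2 * ε ^ q) := by
        rw [ENNReal.ofReal_mul (by positivity)]
        rw [ENNReal.ofReal_natCast]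
        calc _ ≤ ENNReal.ofReal (ε ^ q) + ENNReal.ofReal (ε ^ q) := hsum
          _ = ENNReal.ofReal (2 * ε ^ q) := by
              rw [← ENNReal.ofReal_add (by positivity) (by positivity)]
              ring_nf
      exact (ENNReal.ofReal_le_ofReal_iff (by positivity)).mp h1
    -- lower-bound the left-hand side
    have hMge : N0 ≤ 2 ^ (k + 1) * m0 := by
      have h1 : m0 ≤ 2 ^ (k + 1) * m0 := Nat.le_mul_of_pos_left m0 (Nat.pow_pos (by norm_num))
      omega
    have hM0 : (0:ℝ) < ((2 ^ (k + 1) * m0 : ℕ) : ℝ) := by positivity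
    have hμM : (c / ((2 ^ (k + 1) * m0 : ℕ) : ℝ)) ^ b ≤ μ (2 ^ (k + 1) * m0) := by
      have h1 := hN0 _ hMge
      have h2 : c / ((2 ^ (k + 1) * m0 : ℕ) : ℝ) ≤ μ (2 ^ (k + 1) * m0) ^ (1 / b) := by
        rw [div_le_iff₀ hM0]
        calc c ≤ ((2 ^ (k + 1) * m0 : ℕ) : ℝ) * μ (2 ^ (k + 1) * m0) ^ (1 / b) := h1
          _ = μ (2 ^ (k + 1) * m0) ^ (1 / b) * ((2 ^ (k + 1) * m0 : ℕ) : ℝ) := mul_comm _ _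
      calc (c / ((2 ^ (k + 1) * m0 : ℕ) : ℝ)) ^ b
          ≤ (μ (2 ^ (k + 1) * m0) ^ (1 / b)) ^ b :=
            Real.rpow_le_rpow (by positivity) h2 hb.le
        _ = μ (2 ^ (k + 1) * m0) := by
            rw [← Real.rpow_mul (hpos _).le, one_div_mul_cancel hb.ne', Real.rpow_one]
    have hKM : ((2 ^ (k + 1) * m0 : ℕ) : ℝ) = 2 * ((2 ^ k * m0 : ℕ) : ℝ) := by
      have h1 : 2 ^ (k + 1) * m0 = 2 * (2 ^ k * m0) := by
        rw [pow_succ]; ring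
      exact_mod_cast h1
    have hKr : (0:ℝ) < ((2 ^ k * m0 : ℕ) : ℝ) := hKpos k
    -- K * δ^q = (μ M * K^b)^q
    have e1 : ((2 ^ k * m0 : ℕ) : ℝ) * δ k ^ q
        = (μ (2 ^ (k + 1) * m0) * ((2 ^ k * m0 : ℕ) : ℝ) ^ b) ^ q := by
      rw [hδ]
      rw [Real.mul_rpow (hpos _).le (Real.rpow_nonneg hKr.le _),
        Real.mul_rpow (hpos _).le (Real.rpow_nonneg hKr.le _),
        ← Real.rpow_mul hKr.le, ← Real.rpow_mul hKr.le]
      have hKK : ((2 ^ k * m0 : ℕ) : ℝ) * ((2 ^ k * m0 : ℕ) : ℝ) ^ (-t * q)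
          = ((2 ^ k * m0 : ℕ) : ℝ) ^ (b * q) := by
        nth_rewrite 1 [show ((2 ^ k * m0 : ℕ) : ℝ) = ((2 ^ k * m0 : ℕ) : ℝ) ^ (1:ℝ) from
          (Real.rpow_one _).symm]
        rw [← Real.rpow_add hKr]
        congr 1
        linarith [hqbt]
      calc ((2 ^ k * m0 : ℕ) : ℝ) *
            (μ (2 ^ (k + 1) * m0) ^ q * ((2 ^ k * m0 : ℕ) : ℝ) ^ (-t * q))
          = μ (2 ^ (k + 1) * m0) ^ q *
            (((2 ^ k * m0 : ℕ) : ℝ) * ((2 ^ k * m0 : ℕ) : ℝ) ^ (-t * q)) := by ring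
        _ = μ (2 ^ (k + 1) * m0) ^ q * ((2 ^ k * m0 : ℕ) : ℝ) ^ (b * q) := by rw [hKK]
    have e2 : s ≤ μ (2 ^ (k + 1) * m0) * ((2 ^ k * m0 : ℕ) : ℝ) ^ b := by
      have hc2 : c / 2 = c / ((2 ^ (k + 1) * m0 : ℕ) : ℝ) * ((2 ^ k * m0 : ℕ) : ℝ) := by
        rw [hKM]
        field_simp
      calc s = (c / 2) ^ b := hs
        _ = (c / ((2 ^ (k + 1) * m0 : ℕ) : ℝ) * ((2 ^ k * m0 : ℕ) : ℝ)) ^ b := by rw [hc2]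
        _ = (c / ((2 ^ (k + 1) * m0 : ℕ) : ℝ)) ^ b * ((2 ^ k * m0 : ℕ) : ℝ) ^ b :=
            Real.mul_rpow (by positivity) hKr.le
        _ ≤ μ (2 ^ (k + 1) * m0) * ((2 ^ k * m0 : ℕ) : ℝ) ^ b :=
            mul_le_mul_of_nonneg_right hμM (Real.rpow_nonneg hKr.le _)
    have hKδ : s ^ q ≤ ((2 ^ k * m0 : ℕ) : ℝ) * δ k ^ q := by
      rw [e1]
      exact Real.rpow_le_rpow hs0.le e2 hq0.le
    -- finish
    have h2q : (2:ℝ) ≤ 2 ^ q := by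
      calc (2:ℝ) = 2 ^ (1:ℝ) := (Real.rpow_one 2).symm
        _ ≤ 2 ^ q := Real.rpow_le_rpow_of_exponent_le one_le_two hq1
    have h3 : (s / 2) ^ q ≤ 2 * ε ^ q := by
      have hd : (s / 2) ^ q = s ^ q / 2 ^ q := Real.div_rpow hs0.le (by norm_num) q
      have hd2 : (δ k / 2) ^ q = δ k ^ q / 2 ^ q :=
        Real.div_rpow (hδpos k).le (by norm_num) q
      have h2qpos : (0:ℝ) < 2 ^ q := Real.rpow_pos_of_pos (by norm_num) q
      rw [hd]
      calc s ^ q / 2 ^ q ≤ ((2 ^ k * m0 : ℕ) : ℝ) * δ k ^ q / 2 ^ q := by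
            gcongr
        _ = ((2 ^ k * m0 : ℕ) : ℝ) * (δ k / 2) ^ q := by rw [hd2]; ring
        _ ≤ 2 * ε ^ q := hreal
    have h4 : (2 * ε) ^ q < (s / 2) ^ q :=
      Real.rpow_lt_rpow (by positivity) (by linarith) hq0
    have h5 : 2 * ε ^ q ≤ 2 ^ q * ε ^ q :=
      mul_le_mul_of_nonneg_right h2q (by positivity)
    have h6 : (2:ℝ) ^ q * ε ^ q = (2 * ε) ^ q := (Real.mul_rpow (by norm_num) hε.le).symm
    linarith
  -- pigeonhole: two test points share a center
  obtain ⟨j, hj, k, hk, hjk, heq⟩ :=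
    Finset.exists_ne_map_eq_of_card_lt_of_maps_to
      (s := Finset.range (S.card + 1)) (t := S)
      (by simp) (fun a _ => (hch a).choose_spec.1)
  rcases hjk.lt_or_gt with h | h
  · exact key j k h (hch j).choose
      (by rw [heq]; exact (hch k).choose_spec.2) (hch j).choose_spec.2
  · exact key k j h (hch k).choose
      (by rw [← heq]; exact (hch j).choose_spec.2) (hch k).choose_spec.2
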